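/- Let 1 < p < 2, k ≥ 1 and M > 0. There exists a constant c = c(p, M) > 0 such that for all ξ, η ∈ ℝ^k with |η| ≤ M one has |V(ξ − η)| ≤ c(p, M) · |V(ξ) − V(η)|. -/

import Mathlib

/-- The auxiliary function `V(ξ) = (1 + |ξ|²)^((p-2)/4) ξ`. -/
noncomputable def V {E : Type*} [NormedAddCommGroup E] [NormedSpace ℝ E] (p : ℝ) (ξ : E) : E :=
  ((1 + ‖ξ‖ ^ 2) ^ ((p - 2) / 4)) • ξ

lemma le_aux (x y w M : ℝ) (hx : 0 ≤ x) (hw : 0 ≤ w) (hy : 0 ≤ y) (hM : 0 < M)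
    (hxw : x ≤ w + M) (hyM : y ≤ M) :
    1 + 2 * (x ^ 2 + y ^ 2) ≤ (4 + 6 * M ^ 2) * (1 + w ^ 2) := by
  nlinarith [sq_nonneg (w - M), sq_nonneg w, sq_nonneg M, mul_le_mul hxw hxw hx (by linarith),
    mul_le_mul hyM hyM hy (by linarith)]

/-- One-variable core estimate. -/
lemma core_aux (a b c α B : ℝ) (hα0 : α ≤ 0) (hα1 : 0 < 1 + 2 * α)
    (hc : 0 ≤ c) (hcs : b ^ 2 ≤ a * c)
    (hpos : ∀ t : ℝ, 0 < 1 + a + 2 * b * t + c * t ^ 2)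
    (hB : ∀ t ∈ Set.Icc (0 : ℝ) 1, 1 + a + 2 * b * t + c * t ^ 2 ≤ B) :
    (1 + 2 * α) * B ^ α * c ≤
      (1 + a + 2 * b + c) ^ α * (b + c) - (1 + a) ^ α * b := by
  set g : ℝ → ℝ := fun t => 1 + a + 2 * b * t + c * t ^ 2 with hg
  have hBpos : 0 < B := lt_of_lt_of_le (hpos 0) (by simpa using hB 0 (by norm_num))
  set K : ℝ := (1 + 2 * α) * B ^ α * c with hK
  set f : ℝ → ℝ := fun t => (g t) ^ α * (b + c * t) - K * t with hf
  have hgd : ∀ t : ℝ, HasDerivAt g (2 * b + 2 * c * t) t := by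
    intro t
    have : HasDerivAt (fun t : ℝ => 1 + a + 2 * b * t + c * t ^ 2)
        (0 + 2 * b * 1 + c * (2 * t)) t := by
      exact (((hasDerivAt_const t (1 + a)).add
        ((hasDerivAt_id t).const_mul (2 * b))).add
        ((hasDerivAt_pow 2 t).const_mul c)).congr_deriv (by ring)
    simpa using this.congr_deriv (by ring)
  have hfd : ∀ t : ℝ, HasDerivAt f
      ((2 * b + 2 * c * t) * α * (g t) ^ (α - 1) * (b + c * t) + (g t) ^ α * c - K) t := by
    intro t
    have h1 : HasDerivAt (fun t => (g t) ^ α)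
        ((2 * b + 2 * c * t) * α * (g t) ^ (α - 1)) t :=
      (hgd t).rpow_const (Or.inl (ne_of_gt (hpos t)))
    have h2 : HasDerivAt (fun t : ℝ => b + c * t) c t := by
      simpa using ((hasDerivAt_id t).const_mul c).const_add b
    have := (h1.mul h2).sub ((hasDerivAt_id t).const_mul K)
    exact this.congr_deriv (by ring)
  have hmono : MonotoneOn f (Set.Icc 0 1) := by
    apply monotoneOn_of_deriv_nonneg (convex_Icc 0 1)
    · exact fun t _ => ((hfd t).continuousAt).continuousWithinAt
    · exact fun t _ => ((hfd t).differentiableAt).differentiableWithinAt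
    · intro t ht
      rw [interior_Icc] at ht
      rw [(hfd t).deriv]
      have hgt : 0 < g t := hpos t
      have hgteq : g t = 1 + a + 2 * b * t + c * t ^ 2 := rfl
      have hsq : (b + c * t) ^ 2 ≤ g t * c := by
        rw [hgteq]; nlinarith [hcs, hc]
      have hpow : (0:ℝ) < (g t) ^ (α - 1) := Real.rpow_pos_of_pos hgt _
      have h4 : 2 * α * (g t * c) * (g t) ^ (α - 1) ≤
          2 * α * ((b + c * t) ^ 2) * (g t) ^ (α - 1) := by
        nlinarith [mul_le_mul_of_nonpos_left (mul_le_mul_of_nonneg_right hsq hpow.le)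
          (show (2:ℝ) * α ≤ 0 by linarith)]
      have h5 : 2 * α * (g t * c) * (g t) ^ (α - 1) = 2 * α * c * (g t) ^ α := by
        rw [show (g t) ^ α = (g t) ^ (α - 1 + 1) by congr 1; ring,
          Real.rpow_add hgt, Real.rpow_one]
        ring
      have hstep1 : (1 + 2 * α) * (g t) ^ α * c ≤
          (2 * b + 2 * c * t) * α * (g t) ^ (α - 1) * (b + c * t) + (g t) ^ α * c := by
        have h3 : (2 * b + 2 * c * t) * α * (g t) ^ (α - 1) * (b + c * t)
            = 2 * α * ((b + c * t) ^ 2) * (g t) ^ (α - 1) := by ring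
        rw [h3]
        nlinarith [h4, h5]
      have hstep2 : B ^ α ≤ (g t) ^ α :=
        Real.rpow_le_rpow_of_nonpos hgt (hB t ⟨le_of_lt ht.1, le_of_lt ht.2⟩) hα0
      have hstep3 : (1 + 2 * α) * B ^ α * c ≤ (1 + 2 * α) * (g t) ^ α * c :=
        mul_le_mul_of_nonneg_right (mul_le_mul_of_nonneg_left hstep2 hα1.le) hc
      have hKeq : K = (1 + 2 * α) * B ^ α * c := rfl
      rw [hKeq]
      linarith [hstep1, hstep3]
  have := hmono (Set.left_mem_Icc.2 zero_le_one) (Set.right_mem_Icc.2 zero_le_one) zero_le_one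
  simp only [hf, hg] at this
  have h0 : (1 + a + 2 * b * 0 + c * 0 ^ 2) = 1 + a := by ring
  have h1 : (1 + a + 2 * b * 1 + c * 1 ^ 2) = 1 + a + 2 * b + c := by ring
  rw [h0, h1] at this
  simp only [mul_zero, mul_one, sub_zero] at this
  linarith

set_option maxHeartbeats 1000000 in
theorem stmt_5 (p : ℝ) (hp1 : 1 < p) (hp2 : p < 2) (k : ℕ) (hk : 1 ≤ k)
    (M : ℝ) (hM : 0 < M) :
    ∃ c : ℝ, 0 < c ∧ ∀ ξ η : EuclideanSpace ℝ (Fin k), ‖η‖ ≤ M →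
      ‖V p (ξ - η)‖ ≤ c * ‖V p ξ - V p η‖ := by
  set α : ℝ := (p - 2) / 4 with hα
  have hα0 : α ≤ 0 := by rw [hα]; linarith
  have hα1 : 0 < 1 + 2 * α := by rw [hα]; linarith
  set C : ℝ := 4 + 6 * M ^ 2 with hC
  have hCpos : (0:ℝ) < C := by positivity
  refine ⟨2 / p * (C ^ α)⁻¹, by positivity, ?_⟩
  intro ξ η hη
  by_cases hξη : ξ = η
  · rw [hξη, sub_self]
    have : V p (0 : EuclideanSpace ℝ (Fin k)) = 0 := by simp [V]
    rw [this, norm_zero]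
    positivity
  · set u : EuclideanSpace ℝ (Fin k) := ξ - η with hu
    have hune : u ≠ 0 := sub_ne_zero_of_ne hξη
    have hunorm : (0:ℝ) < ‖u‖ := norm_pos_iff.2 hune
    set a : ℝ := ‖η‖ ^ 2 with ha
    set b : ℝ := inner ℝ η u with hb
    set c : ℝ := ‖u‖ ^ 2 with hc
    set B : ℝ := 1 + 2 * (‖ξ‖ ^ 2 + ‖η‖ ^ 2) with hB
    have hgnorm : ∀ t : ℝ, 1 + a + 2 * b * t + c * t ^ 2 = 1 + ‖η + t • u‖ ^ 2 := by
      intro t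
      rw [norm_add_sq_real, real_inner_smul_right, norm_smul]
      simp only [Real.norm_eq_abs, mul_pow, sq_abs]
      ring
    have hpos : ∀ t : ℝ, 0 < 1 + a + 2 * b * t + c * t ^ 2 := by
      intro t; rw [hgnorm t]; positivity
    have hcs : b ^ 2 ≤ a * c := by
      have := real_inner_mul_inner_self_le η u
      rw [real_inner_self_eq_norm_sq, real_inner_self_eq_norm_sq] at this
      simpa [hb, ha, hc, sq] using this
    have hBb : ∀ t ∈ Set.Icc (0:ℝ) 1, 1 + a + 2 * b * t + c * t ^ 2 ≤ B := by
      intro t ht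
      rw [hgnorm t]
      have hcomb : η + t • u = (1 - t) • η + t • ξ := by
        rw [hu, smul_sub]; module
      have hle : ‖η + t • u‖ ≤ ‖η‖ + ‖ξ‖ := by
        rw [hcomb]
        calc ‖(1 - t) • η + t • ξ‖ ≤ ‖(1 - t) • η‖ + ‖t • ξ‖ := norm_add_le _ _
        _ = |1 - t| * ‖η‖ + |t| * ‖ξ‖ := by rw [norm_smul, norm_smul]; simp [Real.norm_eq_abs]
        _ ≤ 1 * ‖η‖ + 1 * ‖ξ‖ := by
            gcongr
            · exact abs_le.2 ⟨by linarith [ht.1, ht.2], by linarith [ht.1, ht.2]⟩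
            · exact abs_le.2 ⟨by linarith [ht.1, ht.2], ht.2⟩
        _ = ‖η‖ + ‖ξ‖ := by ring
      have h2 : ‖η + t • u‖ ^ 2 ≤ (‖η‖ + ‖ξ‖) ^ 2 := by
        apply sq_le_sq' _ hle
        linarith [norm_nonneg (η + t • u)]
      rw [hB]
      nlinarith [h2, sq_nonneg (‖ξ‖ - ‖η‖)]
    have hcore := core_aux a b c α B hα0 hα1 (by positivity) hcs hpos hBb
    -- identify the RHS of core with the inner product
    have hξu : ξ = η + u := by rw [hu]; abel
    have hnξ : 1 + a + 2 * b + c = 1 + ‖ξ‖ ^ 2 := by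
      have h1g := hgnorm 1
      simp only [one_smul] at h1g
      rw [hξu]
      nlinarith [h1g]
    have hinner : (1 + a + 2 * b + c) ^ α * (b + c) - (1 + a) ^ α * b
        = inner ℝ (V p ξ - V p η) u := by
      rw [inner_sub_left]
      simp only [V, real_inner_smul_left]
      rw [← hnξ, ← ha]
      have hbξ : (inner ℝ ξ u : ℝ) = b + c := by
        rw [hξu, inner_add_left, real_inner_self_eq_norm_sq]
      rw [hbξ]
    rw [hinner] at hcore
    have hCS : (inner ℝ (V p ξ - V p η) u : ℝ) ≤ ‖V p ξ - V p η‖ * ‖u‖ :=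
      real_inner_le_norm _ _
    -- lower bound on ‖V p ξ - V p η‖
    have hBpos : (0:ℝ) < B := by rw [hB]; positivity
    have hmain : (1 + 2 * α) * B ^ α * ‖u‖ ≤ ‖V p ξ - V p η‖ := by
      have h := le_trans hcore hCS
      have h2 : (1 + 2 * α) * B ^ α * ‖u‖ * ‖u‖ ≤ ‖V p ξ - V p η‖ * ‖u‖ := by
        calc (1 + 2 * α) * B ^ α * ‖u‖ * ‖u‖ = (1 + 2 * α) * B ^ α * c := by rw [hc]; ring
        _ ≤ ‖V p ξ - V p η‖ * ‖u‖ := h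
      exact le_of_mul_le_mul_right h2 hunorm
    -- compare B with 1 + ‖u‖²
    have hξle : ‖ξ‖ ≤ ‖u‖ + M := by
      calc ‖ξ‖ = ‖u + η‖ := by rw [hξu]; congr 1; abel
      _ ≤ ‖u‖ + ‖η‖ := norm_add_le _ _
      _ ≤ ‖u‖ + M := by linarith
    have hBle : B ≤ C * (1 + ‖u‖ ^ 2) := by
      rw [hB, hC]
      exact le_aux ‖ξ‖ ‖η‖ ‖u‖ M (norm_nonneg ξ) (norm_nonneg u) (norm_nonneg η) hM hξle hη
    have hBα : (C * (1 + ‖u‖ ^ 2)) ^ α ≤ B ^ α :=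
      Real.rpow_le_rpow_of_nonpos hBpos hBle hα0
    have hmul : (C * (1 + ‖u‖ ^ 2)) ^ α = C ^ α * (1 + ‖u‖ ^ 2) ^ α :=
      Real.mul_rpow (le_of_lt hCpos) (by positivity)
    rw [hmul] at hBα
    -- norm of V p u
    have hVu : ‖V p u‖ = (1 + ‖u‖ ^ 2) ^ α * ‖u‖ := by
      rw [V, norm_smul, Real.norm_eq_abs, ← hα,
        abs_of_nonneg (Real.rpow_nonneg (by positivity) _)]
    have hfinal : (1 + 2 * α) * (C ^ α * (1 + ‖u‖ ^ 2) ^ α) * ‖u‖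
        ≤ ‖V p ξ - V p η‖ := by
      refine le_trans ?_ hmain
      exact mul_le_mul_of_nonneg_right (mul_le_mul_of_nonneg_left hBα hα1.le) (norm_nonneg u)
    have hCαpos : (0:ℝ) < C ^ α := Real.rpow_pos_of_pos hCpos _
    have hppos : (0:ℝ) < p := by linarith
    have hpne : p ≠ 0 := ne_of_gt hppos
    have hCαne : C ^ α ≠ 0 := ne_of_gt hCαpos
    show ‖V p u‖ ≤ 2 / p * (C ^ α)⁻¹ * ‖V p ξ - V p η‖
    rw [hVu]
    calc (1 + ‖u‖ ^ 2) ^ α * ‖u‖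
        = 2 / p * (C ^ α)⁻¹ * ((1 + 2 * α) * (C ^ α * (1 + ‖u‖ ^ 2) ^ α) * ‖u‖) := by
          have hpα : 1 + 2 * α = p / 2 := by rw [hα]; ring
          rw [hpα]
          field_simp
      _ ≤ 2 / p * (C ^ α)⁻¹ * ‖V p ξ - V p η‖ :=
          mul_le_mul_of_nonneg_left hfinal (by positivity)
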